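/- Let k be a commutative ring, k' a commutative k-algebra that is faithfully flat as a k-module, A a finitely presented commutative k-algebra, and A' = k' ⊗_k A the base change. If A' is formally unramified over k', then A is formally unramified over k; and if A' is étale over k', then A is étale over k. -/

import Mathlib

open scoped TensorProduct

universe u

namespace Stmt13Aux

open TensorProduct LinearMap

variable (k k' : Type u) [CommRing k] [CommRing k'] [Algebra k k']

/-- Contraction `k' ⊗[k] P → P` for a `k'`-module `P`. -/
noncomputable def contr (P : Type u) [AddCommGroup P] [Module k P] [Module k' P]
    [IsScalarTower k k' P] : k' ⊗[k] P →ₗ[k] P :=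
  TensorProduct.lift (LinearMap.mk₂ k (· • ·) add_smul (fun c a y => smul_assoc c a y)
    smul_add (fun c a y => smul_comm a c y))

@[simp] lemma contr_tmul (P : Type u) [AddCommGroup P] [Module k P] [Module k' P]
    [IsScalarTower k k' P] (a : k') (y : P) : contr k k' P (a ⊗ₜ y) = a • y := rfl

variable [Module.FaithfullyFlat k k']

lemma one_tmul_injective (M : Type u) [AddCommGroup M] [Module k M] :
    Function.Injective (fun m : M => (1 : k') ⊗ₜ[k] m) := by
  have key : ∀ m : M, (1 : k') ⊗ₜ[k] m = 0 → m = 0 := by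
    intro m hm
    have hz : LinearMap.lTensor k' (LinearMap.toSpanSingleton k M m) = 0 := by
      apply TensorProduct.ext'
      intro c x
      have hc : (c ⊗ₜ[k] m : k' ⊗[k] M) = c • ((1 : k') ⊗ₜ[k] m) := by
        rw [smul_tmul', smul_eq_mul, mul_one]
      simp only [LinearMap.lTensor_tmul, LinearMap.toSpanSingleton_apply, LinearMap.zero_apply,
        tmul_smul]
      rw [hc, hm, smul_zero, smul_zero]
    have h0 := (Module.FaithfullyFlat.zero_iff_lTensor_zero k k'
      (LinearMap.toSpanSingleton k M m)).mpr hz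
    simpa using LinearMap.congr_fun h0 1
  intro m n h
  have h' : (1 : k') ⊗ₜ[k] (m - n) = 0 := by
    rw [tmul_sub]
    simpa [sub_eq_zero] using h
  have := key (m - n) h'
  exact sub_eq_zero.mp this

lemma one_tmul_equalizer (M : Type u) [AddCommGroup M] [Module k M] (x : k' ⊗[k] M)
    (hx : (1 : k') ⊗ₜ[k] x = LinearMap.lTensor k' (TensorProduct.mk k k' M 1) x) :
    ∃ m : M, (1 : k') ⊗ₜ[k] m = x := by
  set f : M →ₗ[k] k' ⊗[k] M := TensorProduct.mk k k' M 1 with hf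
  set g : k' ⊗[k] M →ₗ[k] k' ⊗[k] (k' ⊗[k] M) :=
    TensorProduct.mk k k' (k' ⊗[k] M) 1 - LinearMap.lTensor k' f with hg
  have hexact : Function.Exact f g := by
    apply Module.FaithfullyFlat.lTensor_reflects_exact k k'
    rw [LinearMap.exact_iff]
    apply le_antisymm
    · intro y hy
      rw [LinearMap.mem_ker] at hy
      have key1 : (contr k k' (k' ⊗[k] (k' ⊗[k] M))).comp
          (LinearMap.lTensor k' (TensorProduct.mk k k' (k' ⊗[k] M) 1)) = LinearMap.id := by
        apply TensorProduct.ext'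
        intro a w
        simp only [LinearMap.comp_apply, LinearMap.lTensor_tmul, TensorProduct.mk_apply,
          contr_tmul, LinearMap.id_apply]
        rw [smul_tmul', smul_eq_mul, mul_one]
      have key2 : (contr k k' (k' ⊗[k] (k' ⊗[k] M))).comp
          (LinearMap.lTensor k' (LinearMap.lTensor k' f)) =
          (LinearMap.lTensor k' f).comp (contr k k' (k' ⊗[k] M)) := by
        apply TensorProduct.ext'
        intro a w
        simp only [LinearMap.comp_apply, LinearMap.lTensor_tmul, contr_tmul]
        induction w using TensorProduct.induction_on with
        | zero => simp
        | tmul c m => simp [smul_tmul', hf]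
        | add u v hu hv => simp only [map_add, smul_add, hu, hv]
      have hy' : LinearMap.lTensor k' (TensorProduct.mk k k' (k' ⊗[k] M) 1) y
          = LinearMap.lTensor k' (LinearMap.lTensor k' f) y := by
        rw [hg, LinearMap.lTensor_sub] at hy
        exact sub_eq_zero.mp hy
      refine ⟨contr k k' (k' ⊗[k] M) y, ?_⟩
      have e1 := LinearMap.congr_fun key1 y
      have e2 := LinearMap.congr_fun key2 y
      simp only [LinearMap.comp_apply, LinearMap.id_apply] at e1 e2
      rw [← e2, ← hy', e1]
    · rintro _ ⟨z, rfl⟩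
      rw [LinearMap.mem_ker, ← LinearMap.comp_apply, ← LinearMap.lTensor_comp]
      have : g.comp f = 0 := by
        apply LinearMap.ext
        intro m
        simp [hg, hf]
      rw [this]
      simp
  obtain ⟨m, hm⟩ := (hexact x).mp (by
    show g x = 0
    rw [hg, LinearMap.sub_apply, sub_eq_zero]
    exact hx)
  exact ⟨m, hm⟩

end Stmt13Aux
set_option maxHeartbeats 1000000 in
set_option synthInstance.maxHeartbeats 400000 in
theorem Stmt13Aux.smooth_descent (k k' A : Type u) [CommRing k] [CommRing k'] [CommRing A]
    [Algebra k k'] [Algebra k A] [Module.FaithfullyFlat k k']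
    [Algebra.FormallyUnramified k A]
    [Algebra.FormallySmooth k' (k' ⊗[k] A)] : Algebra.FormallySmooth k A := by
  classical
  apply Algebra.FormallySmooth.of_comp_surjective
  intro B _ _ I hI f
  -- basic inclusions
  set ι₁ : B →ₐ[k] k' ⊗[k] B := Algebra.TensorProduct.includeRight with hι₁
  set ι₂ : (k' ⊗[k] B) →ₐ[k] k' ⊗[k] (k' ⊗[k] B) := Algebra.TensorProduct.includeRight with hι₂
  -- the base changed quotient map
  set q : (k' ⊗[k] B) →ₐ[k'] k' ⊗[k] (B ⧸ I) :=
    Algebra.TensorProduct.map (AlgHom.id k' k') (Ideal.Quotient.mkₐ k I) with hq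
  have hq_surj : Function.Surjective q := by
    intro z
    induction z using TensorProduct.induction_on with
    | zero => exact ⟨0, map_zero _⟩
    | tmul c y =>
      obtain ⟨b, rfl⟩ := Ideal.Quotient.mkₐ_surjective k I y
      exact ⟨c ⊗ₜ b, rfl⟩
    | add u v hu hv =>
      obtain ⟨u', hu'⟩ := hu; obtain ⟨v', hv'⟩ := hv
      exact ⟨u' + v', by rw [map_add, hu', hv']⟩
  have hqlin : ∀ w : k' ⊗[k] B,
      q w = LinearMap.lTensor k' (Ideal.Quotient.mkₐ k I).toLinearMap w := by
    intro w
    induction w using TensorProduct.induction_on with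
    | zero => simp
    | tmul c b => rfl
    | add u v hu hv => rw [map_add, map_add, hu, hv]
  -- kernel of q
  have hker : RingHom.ker q = I.map ι₁.toRingHom := by
    apply le_antisymm
    · intro x hx
      rw [RingHom.mem_ker] at hx
      have hx' : LinearMap.lTensor k' (Ideal.Quotient.mkₐ k I).toLinearMap x = 0 := by
        rw [← hqlin]; exact hx
      have hexact0 : Function.Exact ((I.restrictScalars k).subtype)
          (Ideal.Quotient.mkₐ k I).toLinearMap := by
        intro y
        rw [Set.mem_range]
        constructor
        · intro hy
          have hyI : y ∈ I := by
            rwa [show ((Ideal.Quotient.mkₐ k I).toLinearMap y = Ideal.Quotient.mk I y) from rfl,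
              Ideal.Quotient.eq_zero_iff_mem] at hy
          exact ⟨⟨y, hyI⟩, rfl⟩
        · rintro ⟨⟨y, hyI⟩, rfl⟩
          exact Ideal.Quotient.eq_zero_iff_mem.mpr hyI
      have hlex := lTensor_exact k' hexact0
        (fun y => Ideal.Quotient.mkₐ_surjective k I y)
      have hrange : ∀ z : k' ⊗[k] (I.restrictScalars k),
          LinearMap.lTensor k' (I.restrictScalars k).subtype z ∈ I.map ι₁.toRingHom := by
        intro z
        induction z using TensorProduct.induction_on with
        | zero => simp
        | tmul c i =>
          rw [LinearMap.lTensor_tmul]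
          have h1 : ι₁.toRingHom (i : B) ∈ I.map ι₁.toRingHom := Ideal.mem_map_of_mem _ i.2
          have h2 : ((I.restrictScalars k).subtype i : B) = (i : B) := rfl
          have h3 : (c ⊗ₜ[k] (i : B) : k' ⊗[k] B)
              = (c ⊗ₜ[k] (1 : B)) * ((1 : k') ⊗ₜ[k] (i : B)) := by
            rw [Algebra.TensorProduct.tmul_mul_tmul, mul_one, one_mul]
          rw [h2, h3]
          exact Ideal.mul_mem_left _ _ h1
        | add u v hu hv => rw [map_add]; exact Ideal.add_mem _ hu hv
      obtain ⟨z, hz⟩ := (hlex x).mp hx'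
      rw [← hz]
      exact hrange z
    · rw [Ideal.map_le_iff_le_comap]
      intro i hi
      rw [Ideal.mem_comap, RingHom.mem_ker]
      show q ((1 : k') ⊗ₜ[k] i) = 0
      have h0 : q ((1 : k') ⊗ₜ[k] i) = (1 : k') ⊗ₜ[k] (Ideal.Quotient.mk I i) := rfl
      rw [h0, Ideal.Quotient.eq_zero_iff_mem.mpr hi, TensorProduct.tmul_zero]
  have hIq : (RingHom.ker q) ^ 2 = ⊥ := by
    rw [hker, ← Ideal.map_pow, hI, Ideal.map_bot]
  -- lift over k'
  set e := Ideal.quotientKerAlgEquivOfSurjective hq_surj with he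
  obtain ⟨g', hg'⟩ := Algebra.FormallySmooth.comp_surjective (R := k') (A := k' ⊗[k] A)
    (RingHom.ker q) hIq
    (e.symm.toAlgHom.comp (Algebra.TensorProduct.map (AlgHom.id k' k') f))
  have hq_g' : ∀ x, q (g' x) = Algebra.TensorProduct.map (AlgHom.id k' k') f x := by
    intro x
    have h1 := AlgHom.congr_fun hg' x
    have h2 : e ((Ideal.Quotient.mkₐ k' (RingHom.ker q)).comp g' x) = q (g' x) := rfl
    rw [h1] at h2
    have h3 : e (e.symm ((Algebra.TensorProduct.map (AlgHom.id k' k') f) x)) = q (g' x) := h2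
    rw [AlgEquiv.apply_symm_apply] at h3
    exact h3.symm
  -- swap equivalences
  set σa : k' ⊗[k] (k' ⊗[k] A) ≃ₐ[k] k' ⊗[k] (k' ⊗[k] A) :=
    (Algebra.TensorProduct.assoc k k k k' k' A).symm.trans
      ((Algebra.TensorProduct.congr (Algebra.TensorProduct.comm k k' k')
        AlgEquiv.refl).trans (Algebra.TensorProduct.assoc k k k k' k' A)) with hσa
  set σb : k' ⊗[k] (k' ⊗[k] B) ≃ₐ[k] k' ⊗[k] (k' ⊗[k] B) :=
    (Algebra.TensorProduct.assoc k k k k' k' B).symm.trans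
      ((Algebra.TensorProduct.congr (Algebra.TensorProduct.comm k k' k')
        AlgEquiv.refl).trans (Algebra.TensorProduct.assoc k k k k' k' B)) with hσb
  have σa_tmul : ∀ (x y : k') (m : A), σa (x ⊗ₜ (y ⊗ₜ m)) = y ⊗ₜ (x ⊗ₜ m) := by
    intro x y m
    simp [hσa, Algebra.TensorProduct.congr_apply]
  have σb_tmul : ∀ (x y : k') (m : B), σb (x ⊗ₜ (y ⊗ₜ m)) = y ⊗ₜ (x ⊗ₜ m) := by
    intro x y m
    simp [hσb, Algebra.TensorProduct.congr_apply]
  have σa_symm_tmul : ∀ (x y : k') (m : A), σa.symm (x ⊗ₜ (y ⊗ₜ m)) = y ⊗ₜ (x ⊗ₜ m) := by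
    intro x y m
    rw [AlgEquiv.symm_apply_eq, σa_tmul]
  -- the Θ equivalences
  set Θa : ((k' ⊗[k] k') ⊗[k] A) ≃ₐ[k] k' ⊗[k] (k' ⊗[k] A) :=
    (Algebra.TensorProduct.congr (Algebra.TensorProduct.comm k k' k')
      AlgEquiv.refl).trans (Algebra.TensorProduct.assoc k k k k' k' A) with hΘa
  set Θb : ((k' ⊗[k] k') ⊗[k] B) ≃ₐ[k] k' ⊗[k] (k' ⊗[k] B) :=
    (Algebra.TensorProduct.congr (Algebra.TensorProduct.comm k k' k')
      AlgEquiv.refl).trans (Algebra.TensorProduct.assoc k k k k' k' B) with hΘb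
  have Θa_tmul : ∀ (y x : k') (m : A), Θa ((y ⊗ₜ x) ⊗ₜ m) = x ⊗ₜ (y ⊗ₜ m) := by
    intro y x m
    simp [hΘa, Algebra.TensorProduct.congr_apply]
  have Θb_tmul : ∀ (y x : k') (m : B), Θb ((y ⊗ₜ x) ⊗ₜ m) = x ⊗ₜ (y ⊗ₜ m) := by
    intro y x m
    simp [hΘb, Algebra.TensorProduct.congr_apply]
  -- algebra structures over k'' = k' ⊗[k] k'
  letI algTA : Algebra (k' ⊗[k] k') (k' ⊗[k] (k' ⊗[k] A)) :=
    (Θa.toAlgHom.toRingHom.comp (algebraMap (k' ⊗[k] k') ((k' ⊗[k] k') ⊗[k] A))).toAlgebra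
  letI algTB : Algebra (k' ⊗[k] k') (k' ⊗[k] (k' ⊗[k] B)) :=
    (Θb.toAlgHom.toRingHom.comp (algebraMap (k' ⊗[k] k') ((k' ⊗[k] k') ⊗[k] B))).toAlgebra
  haveI hunram : Algebra.FormallyUnramified (k' ⊗[k] k') (k' ⊗[k] (k' ⊗[k] A)) := by
    have e' : ((k' ⊗[k] k') ⊗[k] A) ≃ₐ[k' ⊗[k] k'] (k' ⊗[k] (k' ⊗[k] A)) :=
      AlgEquiv.ofRingEquiv (f := Θa.toRingEquiv) (fun r => rfl)
    exact Algebra.FormallyUnramified.of_equiv e'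
  have halgTA : ∀ (y x : k'),
      algebraMap (k' ⊗[k] k') (k' ⊗[k] (k' ⊗[k] A)) (y ⊗ₜ x) = x ⊗ₜ (y ⊗ₜ (1 : A)) := by
    intro y x
    show Θa ((y ⊗ₜ x) ⊗ₜ (1 : A)) = x ⊗ₜ (y ⊗ₜ (1 : A))
    rw [Θa_tmul]
  have halgTB : ∀ (y x : k'),
      algebraMap (k' ⊗[k] k') (k' ⊗[k] (k' ⊗[k] B)) (y ⊗ₜ x) = x ⊗ₜ (y ⊗ₜ (1 : B)) := by
    intro y x
    show Θb ((y ⊗ₜ x) ⊗ₜ (1 : B)) = x ⊗ₜ (y ⊗ₜ (1 : B))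
    rw [Θb_tmul]
  -- the two lifts over k''
  set ψ₁k : (k' ⊗[k] (k' ⊗[k] A)) →ₐ[k] k' ⊗[k] (k' ⊗[k] B) :=
    Algebra.TensorProduct.map (AlgHom.id k k') (g'.restrictScalars k) with hψ₁k
  set ψ₂k : (k' ⊗[k] (k' ⊗[k] A)) →ₐ[k] k' ⊗[k] (k' ⊗[k] B) :=
    (σb.toAlgHom.comp ψ₁k).comp σa.symm.toAlgHom with hψ₂k
  have hψ₁k_tmul : ∀ (x : k') (w : k' ⊗[k] A), ψ₁k (x ⊗ₜ w) = x ⊗ₜ g' w := fun x w => rfl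
  have hg1 : ∀ y : k', g' (y ⊗ₜ (1 : A)) = y ⊗ₜ (1 : B) := by
    intro y
    have h1 : (y ⊗ₜ[k] (1 : A) : k' ⊗[k] A) = algebraMap k' (k' ⊗[k] A) y := by
      rw [Algebra.TensorProduct.algebraMap_apply]; rfl
    rw [h1, g'.commutes, Algebra.TensorProduct.algebraMap_apply]; rfl
  have hψ₁comm : ∀ r : k' ⊗[k] k',
      ψ₁k (algebraMap (k' ⊗[k] k') (k' ⊗[k] (k' ⊗[k] A)) r)
        = algebraMap (k' ⊗[k] k') (k' ⊗[k] (k' ⊗[k] B)) r := by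
    intro r
    induction r using TensorProduct.induction_on with
    | zero => rw [map_zero, map_zero, map_zero]
    | tmul y x =>
      rw [halgTA, halgTB]
      show ψ₁k (x ⊗ₜ (y ⊗ₜ (1 : A))) = x ⊗ₜ (y ⊗ₜ (1 : B))
      rw [hψ₁k_tmul, hg1]
    | add u v hu hv => rw [map_add, map_add, map_add, hu, hv]
  have hψ₂comm : ∀ r : k' ⊗[k] k',
      ψ₂k (algebraMap (k' ⊗[k] k') (k' ⊗[k] (k' ⊗[k] A)) r)
        = algebraMap (k' ⊗[k] k') (k' ⊗[k] (k' ⊗[k] B)) r := by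
    intro r
    induction r using TensorProduct.induction_on with
    | zero => rw [map_zero, map_zero, map_zero]
    | tmul y x =>
      rw [halgTA, halgTB]
      show σb (ψ₁k (σa.symm (x ⊗ₜ (y ⊗ₜ (1 : A))))) = x ⊗ₜ (y ⊗ₜ (1 : B))
      rw [σa_symm_tmul, hψ₁k_tmul, hg1, σb_tmul]
    | add u v hu hv => rw [map_add, map_add, map_add, hu, hv]
  set ψ₁ : (k' ⊗[k] (k' ⊗[k] A)) →ₐ[k' ⊗[k] k'] (k' ⊗[k] (k' ⊗[k] B)) :=
    ⟨ψ₁k.toRingHom, hψ₁comm⟩ with hψ₁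
  set ψ₂ : (k' ⊗[k] (k' ⊗[k] A)) →ₐ[k' ⊗[k] k'] (k' ⊗[k] (k' ⊗[k] B)) :=
    ⟨ψ₂k.toRingHom, hψ₂comm⟩ with hψ₂
  -- the square-zero ideal upstairs
  set J : Ideal (k' ⊗[k] (k' ⊗[k] B)) := (I.map ι₁.toRingHom).map ι₂.toRingHom with hJdef
  have hJ : J ^ 2 = ⊥ := by
    rw [hJdef, ← Ideal.map_pow, ← Ideal.map_pow, hI, Ideal.map_bot, Ideal.map_bot]
  -- d₂ as an algebra map
  set m₂ : (k' ⊗[k] B) →ₐ[k] k' ⊗[k] (k' ⊗[k] B) :=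
    Algebra.TensorProduct.map (AlgHom.id k k') ι₁ with hm₂def
  have hm₂ : ∀ w : k' ⊗[k] B,
      m₂ w = LinearMap.lTensor k' (TensorProduct.mk k k' B 1) w := by
    intro w
    induction w using TensorProduct.induction_on with
    | zero => simp
    | tmul c b => rfl
    | add u v hu hv => rw [map_add, map_add, hu, hv]
  have hσb_one : ∀ w : k' ⊗[k] B, σb ((1 : k') ⊗ₜ w) = m₂ w := by
    intro w
    induction w using TensorProduct.induction_on with
    | zero => simp
    | tmul c b => rw [σb_tmul]; rfl
    | add u v hu hv => rw [TensorProduct.tmul_add, map_add, map_add, hu, hv]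
  -- generator computations
  have hG1 : ∀ x : k', ψ₁k (x ⊗ₜ (1 : k' ⊗[k] A)) = ψ₂k (x ⊗ₜ (1 : k' ⊗[k] A)) := by
    intro x
    have h1 : (1 : k' ⊗[k] A) = (1 : k') ⊗ₜ[k] (1 : A) := rfl
    rw [h1, hψ₁k_tmul, hg1, hψ₂k]
    show x ⊗ₜ ((1:k') ⊗ₜ (1:B)) = σb (ψ₁k (σa.symm (x ⊗ₜ ((1:k') ⊗ₜ (1:A)))))
    rw [σa_symm_tmul, hψ₁k_tmul, hg1, σb_tmul]
  have hG2 : ∀ y : k', ψ₁k ((1:k') ⊗ₜ (y ⊗ₜ (1 : A))) = ψ₂k ((1:k') ⊗ₜ (y ⊗ₜ (1 : A))) := by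
    intro y
    rw [hψ₁k_tmul, hg1, hψ₂k]
    show (1:k') ⊗ₜ (y ⊗ₜ (1:B)) = σb (ψ₁k (σa.symm ((1:k') ⊗ₜ (y ⊗ₜ (1:A)))))
    rw [σa_symm_tmul, hψ₁k_tmul, hg1, σb_tmul]
  have hG3 : ∀ a : A, Ideal.Quotient.mk J (ψ₁k ((1:k') ⊗ₜ ((1:k') ⊗ₜ a))) =
      Ideal.Quotient.mk J (ψ₂k ((1:k') ⊗ₜ ((1:k') ⊗ₜ a))) := by
    intro a
    have hA1 : ψ₁k ((1:k') ⊗ₜ ((1:k') ⊗ₜ a)) = (1:k') ⊗ₜ (g' ((1:k') ⊗ₜ a)) := hψ₁k_tmul _ _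
    have hA2 : ψ₂k ((1:k') ⊗ₜ ((1:k') ⊗ₜ a)) = m₂ (g' ((1:k') ⊗ₜ a)) := by
      rw [hψ₂k]
      show σb (ψ₁k (σa.symm ((1:k') ⊗ₜ ((1:k') ⊗ₜ a)))) = _
      rw [σa_symm_tmul, hψ₁k_tmul, hσb_one]
    rw [hA1, hA2, Ideal.Quotient.eq]
    obtain ⟨b, hb⟩ := Ideal.Quotient.mk_surjective (f a)
    have hu : (g' ((1:k') ⊗ₜ a) - (1:k') ⊗ₜ b) ∈ I.map ι₁.toRingHom := by
      rw [← hker, RingHom.mem_ker, map_sub]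
      have h1 : q (g' ((1:k') ⊗ₜ a)) = (1:k') ⊗ₜ[k] (f a) := by rw [hq_g']; rfl
      have h2 : q ((1:k') ⊗ₜ[k] b) = (1:k') ⊗ₜ[k] (Ideal.Quotient.mk I b) := rfl
      rw [h1, h2, hb, sub_self]
    have hd1 : (1:k') ⊗ₜ[k] (g' ((1:k') ⊗ₜ a)) - m₂ (g' ((1:k') ⊗ₜ a))
        = ι₂ (g' ((1:k') ⊗ₜ a) - (1:k') ⊗ₜ b) - m₂ (g' ((1:k') ⊗ₜ a) - (1:k') ⊗ₜ b) := by
      rw [map_sub, map_sub]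
      have e1 : ι₂ (g' ((1:k') ⊗ₜ a)) = (1:k') ⊗ₜ (g' ((1:k') ⊗ₜ a)) := rfl
      have e2 : ι₂ ((1:k') ⊗ₜ[k] b) = (1:k') ⊗ₜ ((1:k') ⊗ₜ[k] b) := rfl
      have e3 : m₂ ((1:k') ⊗ₜ[k] b) = (1:k') ⊗ₜ ((1:k') ⊗ₜ[k] b) := rfl
      rw [e1, e2, e3]
      abel
    rw [hd1]
    refine Ideal.sub_mem J ?_ ?_
    · exact Ideal.mem_map_of_mem ι₂.toRingHom hu
    · have h5 : m₂ (g' ((1:k') ⊗ₜ a) - (1:k') ⊗ₜ b)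
          ∈ (I.map ι₁.toRingHom).map m₂.toRingHom :=
        Ideal.mem_map_of_mem m₂.toRingHom hu
      have h6 : (I.map ι₁.toRingHom).map m₂.toRingHom = J := by
        rw [hJdef, Ideal.map_map, Ideal.map_map]
        have h7 : m₂.toRingHom.comp ι₁.toRingHom = ι₂.toRingHom.comp ι₁.toRingHom :=
          RingHom.ext fun b' => rfl
        rw [h7]
      rwa [h6] at h5
  -- the two maps agree mod J on everything
  have hpoint1 : ∀ w : k' ⊗[k] A,
      Ideal.Quotient.mk J (ψ₁k ((1:k') ⊗ₜ[k] w)) = Ideal.Quotient.mk J (ψ₂k ((1:k') ⊗ₜ[k] w)) := by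
    intro w
    induction w using TensorProduct.induction_on with
    | zero => simp only [TensorProduct.tmul_zero, map_zero]
    | tmul y a =>
      have hfac2 : ((1:k') ⊗ₜ[k] (y ⊗ₜ[k] a) : k' ⊗[k] (k' ⊗[k] A))
          = ((1:k') ⊗ₜ[k] (y ⊗ₜ[k] (1:A))) * ((1:k') ⊗ₜ[k] ((1:k') ⊗ₜ[k] a)) := by
        simp [Algebra.TensorProduct.tmul_mul_tmul]
      rw [hfac2, map_mul, map_mul, map_mul, map_mul, hG2]
      congr 1
      exact hG3 a
    | add u v hu hv =>
      rw [TensorProduct.tmul_add, map_add, map_add, map_add, map_add, hu, hv]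
  have hpoint : ∀ z : k' ⊗[k] (k' ⊗[k] A),
      Ideal.Quotient.mk J (ψ₁k z) = Ideal.Quotient.mk J (ψ₂k z) := by
    intro z
    induction z using TensorProduct.induction_on with
    | zero => simp only [map_zero]
    | tmul x w =>
      have hfac : (x ⊗ₜ[k] w : k' ⊗[k] (k' ⊗[k] A))
          = (x ⊗ₜ[k] (1 : k' ⊗[k] A)) * ((1:k') ⊗ₜ[k] w) := by
        rw [Algebra.TensorProduct.tmul_mul_tmul, mul_one, one_mul]
      rw [hfac, map_mul, map_mul, map_mul, map_mul, hG1]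
      congr 1
      exact hpoint1 w
    | add u v hu hv => rw [map_add, map_add, map_add, map_add, hu, hv]
  have hψeq : ψ₁ = ψ₂ := by
    apply Algebra.FormallyUnramified.comp_injective (R := k' ⊗[k] k') J hJ
    apply AlgHom.ext
    intro z
    have h8 := hpoint z
    simp only [AlgHom.comp_apply, Ideal.Quotient.mkₐ_eq_mk]
    exact h8
  have hkey : ∀ a : A, (1:k') ⊗ₜ[k] (g' ((1:k') ⊗ₜ a)) =
      LinearMap.lTensor k' (TensorProduct.mk k k' B 1) (g' ((1:k') ⊗ₜ a)) := by
    intro a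
    have h1 : ψ₁k ((1:k') ⊗ₜ ((1:k') ⊗ₜ a)) = ψ₂k ((1:k') ⊗ₜ ((1:k') ⊗ₜ a)) :=
      AlgHom.congr_fun hψeq ((1:k') ⊗ₜ ((1:k') ⊗ₜ a))
    have hA2 : ψ₂k ((1:k') ⊗ₜ ((1:k') ⊗ₜ a)) = m₂ (g' ((1:k') ⊗ₜ a)) := by
      rw [hψ₂k]
      show σb (ψ₁k (σa.symm ((1:k') ⊗ₜ ((1:k') ⊗ₜ a)))) = _
      rw [σa_symm_tmul, hψ₁k_tmul, hσb_one]
    rw [hψ₁k_tmul, hA2, hm₂] at h1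
    exact h1
  -- descend the lift
  have hbex : ∀ a : A, ∃ b : B, (1:k') ⊗ₜ[k] b = g' ((1:k') ⊗ₜ a) :=
    fun a => one_tmul_equalizer k k' B _ (hkey a)
  choose gb hgb using hbex
  have hinj : Function.Injective (fun b : B => (1:k') ⊗ₜ[k] b) := one_tmul_injective k k' B
  have hinjQ : Function.Injective (fun y : B ⧸ I => (1:k') ⊗ₜ[k] y) :=
    one_tmul_injective k k' (B ⧸ I)
  have hone : gb 1 = 1 := by
    apply hinj
    show (1:k') ⊗ₜ[k] gb 1 = (1:k') ⊗ₜ[k] (1:B)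
    rw [hgb]
    have h1 : ((1:k') ⊗ₜ[k] (1:A) : k' ⊗[k] A) = 1 := rfl
    rw [h1, map_one]
    rfl
  have hmul : ∀ x y : A, gb (x * y) = gb x * gb y := by
    intro x y
    apply hinj
    show (1:k') ⊗ₜ[k] gb (x*y) = (1:k') ⊗ₜ[k] (gb x * gb y)
    have h1 : ((1:k') ⊗ₜ[k] (gb x * gb y) : k' ⊗[k] B)
        = ((1:k') ⊗ₜ[k] gb x) * ((1:k') ⊗ₜ[k] gb y) := by
      rw [Algebra.TensorProduct.tmul_mul_tmul, one_mul]
    have h2 : ((1:k') ⊗ₜ[k] (x * y) : k' ⊗[k] A)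
        = ((1:k') ⊗ₜ[k] x) * ((1:k') ⊗ₜ[k] y) := by
      rw [Algebra.TensorProduct.tmul_mul_tmul, one_mul]
    rw [h1, hgb, hgb, hgb, h2, map_mul]
  have hzero : gb 0 = 0 := by
    apply hinj
    show (1:k') ⊗ₜ[k] gb 0 = (1:k') ⊗ₜ[k] (0:B)
    rw [hgb, TensorProduct.tmul_zero, TensorProduct.tmul_zero, map_zero]
  have hadd : ∀ x y : A, gb (x + y) = gb x + gb y := by
    intro x y
    apply hinj
    show (1:k') ⊗ₜ[k] gb (x+y) = (1:k') ⊗ₜ[k] (gb x + gb y)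
    rw [TensorProduct.tmul_add, hgb, hgb, hgb, TensorProduct.tmul_add, map_add]
  have hcomm : ∀ c : k, gb (algebraMap k A c) = algebraMap k B c := by
    intro c
    apply hinj
    show (1:k') ⊗ₜ[k] gb (algebraMap k A c) = (1:k') ⊗ₜ[k] (algebraMap k B c)
    rw [hgb]
    have h1 : ((1:k') ⊗ₜ[k] (algebraMap k A c) : k' ⊗[k] A) = algebraMap k (k' ⊗[k] A) c :=
      (Algebra.TensorProduct.algebraMap_apply' c).symm
    have h2 : g' (algebraMap k (k' ⊗[k] A) c) = algebraMap k (k' ⊗[k] B) c :=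
      (g'.restrictScalars k).commutes c
    rw [h1, h2, Algebra.TensorProduct.algebraMap_apply' c]
  refine ⟨⟨⟨⟨⟨gb, hone⟩, hmul⟩, hzero, hadd⟩, hcomm⟩, ?_⟩
  apply AlgHom.ext
  intro a
  apply hinjQ
  show (1:k') ⊗ₜ[k] (Ideal.Quotient.mk I (gb a)) = (1:k') ⊗ₜ[k] (f a)
  have h1 : ((1:k') ⊗ₜ[k] (Ideal.Quotient.mk I (gb a)) : k' ⊗[k] (B ⧸ I))
      = q ((1:k') ⊗ₜ[k] gb a) := rfl
  rw [h1, hgb, hq_g']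
  rfl

theorem Stmt13Aux.unramified_descent (k k' A : Type u) [CommRing k] [CommRing k'] [CommRing A]
    [Algebra k k'] [Algebra k A] [Module.FaithfullyFlat k k']
    [Algebra.FormallyUnramified k' (k' ⊗[k] A)] :
    Algebra.FormallyUnramified k A := by
  letI : Algebra A (k' ⊗[k] A) := Algebra.TensorProduct.rightAlgebra
  haveI : Subsingleton (k' ⊗[k] (KaehlerDifferential k A)) :=
    Equiv.subsingleton (KaehlerDifferential.tensorKaehlerEquivBase k k' A (k' ⊗[k] A)).toEquiv
  exact ⟨Module.FaithfullyFlat.lTensor_reflects_triviality k k' _⟩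

/-- Faithfully flat descent of (formal) unramifiedness and étaleness: if `k'` is a
faithfully flat `k`-algebra and `A` a finitely presented `k`-algebra such that
`A' = k' ⊗[k] A` is formally unramified (resp. étale) over `k'`, then `A` is
formally unramified (resp. étale) over `k`. -/
theorem stmt13 {k k' A : Type u} [CommRing k] [CommRing k'] [CommRing A]
    [Algebra k k'] [Algebra k A] [Module.FaithfullyFlat k k']
    (hA : Algebra.FinitePresentation k A) :
    (Algebra.FormallyUnramified k' (k' ⊗[k] A) → Algebra.FormallyUnramified k A) ∧
    (Algebra.Etale k' (k' ⊗[k] A) → Algebra.Etale k A) := by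
  constructor
  · intro h
    exact Stmt13Aux.unramified_descent k k' A
  · intro h
    haveI := h.formallyEtale
    haveI : Algebra.FormallyUnramified k' (k' ⊗[k] A) := inferInstance
    haveI : Algebra.FormallySmooth k' (k' ⊗[k] A) := inferInstance
    haveI h1 : Algebra.FormallyUnramified k A := Stmt13Aux.unramified_descent k k' A
    haveI h2 : Algebra.FormallySmooth k A := Stmt13Aux.smooth_descent k k' A
    exact { formallyEtale := Algebra.FormallyEtale.iff_formallyUnramified_and_formallySmooth.mpr ⟨h1, h2⟩,
            finitePresentation := hA }
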